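/- For two agents, every ordinal maximin share is feasible: given a family F of partitions of [m] into 2 parts and two additive valuations v_1, v_2 over a set M of m items, there exists a partition (A_1, A_2) of M such that v_i(A_i) ≥ s_F(v_i) for both i, where s_F(v) = max_{P ∈ F} min_j v(B_j^P) with items sorted in non-increasing v-value. -/

import Mathlib

lemma image_sum {M : Type*} [Fintype M] [DecidableEq M] {m : ℕ} (σ : Fin m ≃ M)
    (w : M → ℝ) (B : Finset (Fin m)) :
    ∑ i ∈ B, w (σ i) = ∑ e ∈ B.image σ, w e := by
  rw [Finset.sum_image (fun a _ b _ h => σ.injective h)]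

lemma image_compl {M : Type*} [Fintype M] [DecidableEq M] {m : ℕ} (σ : Fin m ≃ M)
    (B : Finset (Fin m)) : Bᶜ.image σ = (B.image σ)ᶜ := by
  ext e
  simp only [Finset.mem_image, Finset.mem_compl]
  constructor
  · rintro ⟨i, hi, rfl⟩ ⟨j, hj, hji⟩
    exact hi (σ.injective hji ▸ hj)
  · intro h
    exact ⟨σ.symm e, fun hb => h ⟨σ.symm e, hb, σ.apply_symm_apply e⟩, σ.apply_symm_apply e⟩

/-- For two agents, every ordinal maximin share is feasible. Here `F` is a family of
partitions of the index set `Fin m` into two parts, each represented by the finset `B`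
of indices of its first part (the second part being `Bᶜ`). For an additive valuation
with item values `w` and a non-increasing enumeration `σ` of the items, the ordinal
maximin share is `s_F(w) = sup { x | ∃ B ∈ F, both parts (read through σ) have value ≥ x }`.
There is a partition `(A, Aᶜ)` of the items giving each agent at least her share. -/
theorem ordinal_maximin_share_feasible_two_agents {M : Type*} [Fintype M] [DecidableEq M]
    {m : ℕ} (F : Set (Finset (Fin m)))
    (w₁ w₂ : M → ℝ) (hw₁ : ∀ e, 0 ≤ w₁ e) (hw₂ : ∀ e, 0 ≤ w₂ e)
    (σ₁ σ₂ : Fin m ≃ M)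
    (hσ₁ : ∀ i j : Fin m, i ≤ j → w₁ (σ₁ j) ≤ w₁ (σ₁ i))
    (hσ₂ : ∀ i j : Fin m, i ≤ j → w₂ (σ₂ j) ≤ w₂ (σ₂ i)) :
    ∃ A : Finset M,
      sSup {x : ℝ | ∃ B ∈ F, x ≤ ∑ i ∈ B, w₁ (σ₁ i) ∧ x ≤ ∑ i ∈ Bᶜ, w₁ (σ₁ i)}
        ≤ ∑ e ∈ A, w₁ e ∧
      sSup {x : ℝ | ∃ B ∈ F, x ≤ ∑ i ∈ B, w₂ (σ₂ i) ∧ x ≤ ∑ i ∈ Bᶜ, w₂ (σ₂ i)}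
        ≤ ∑ e ∈ Aᶜ, w₂ e := by
  classical
  rcases F.eq_empty_or_nonempty with rfl | ⟨B₀, hB₀⟩
  · refine ⟨Finset.univ, ?_, ?_⟩ <;>
    · rw [show {x : ℝ | ∃ B ∈ (∅ : Set (Finset (Fin m))), x ≤ _ ∧ x ≤ _} = ∅ by
        ext x; simp, Real.sSup_empty]
      exact Finset.sum_nonneg (fun e _ => by first | exact hw₁ e | exact hw₂ e)
  · -- pick B* maximizing f B = min of two parts for agent 1
    set f : Finset (Fin m) → ℝ :=
      fun B => min (∑ i ∈ B, w₁ (σ₁ i)) (∑ i ∈ Bᶜ, w₁ (σ₁ i)) with hf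
    obtain ⟨B, hBF, hBmax⟩ := Set.exists_max_image F f F.toFinite ⟨B₀, hB₀⟩
    have hS₁ : sSup {x : ℝ | ∃ B ∈ F, x ≤ ∑ i ∈ B, w₁ (σ₁ i) ∧ x ≤ ∑ i ∈ Bᶜ, w₁ (σ₁ i)}
        ≤ f B := by
      apply csSup_le
      · exact ⟨f B, B, hBF, min_le_left _ _, min_le_right _ _⟩
      rintro x ⟨C, hCF, h1, h2⟩
      exact le_trans (le_min h1 h2) (hBmax C hCF)
    have total₂ : ∑ e, w₂ e = ∑ i, w₂ (σ₂ i) := (Equiv.sum_comp σ₂ w₂).symm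
    have hS₂ : sSup {x : ℝ | ∃ B ∈ F, x ≤ ∑ i ∈ B, w₂ (σ₂ i) ∧ x ≤ ∑ i ∈ Bᶜ, w₂ (σ₂ i)}
        ≤ (∑ e, w₂ e) / 2 := by
      apply csSup_le
      · exact ⟨min (∑ i ∈ B₀, w₂ (σ₂ i)) (∑ i ∈ B₀ᶜ, w₂ (σ₂ i)),
          B₀, hB₀, min_le_left _ _, min_le_right _ _⟩
      rintro x ⟨C, _, h1, h2⟩
      have := Finset.sum_add_sum_compl C (fun i => w₂ (σ₂ i))
      rw [total₂]
      linarith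
    set A₀ : Finset M := B.image σ₁ with hA₀
    have e1 : ∑ e ∈ A₀, w₁ e = ∑ i ∈ B, w₁ (σ₁ i) := (image_sum σ₁ w₁ B).symm
    have e2 : ∑ e ∈ A₀ᶜ, w₁ e = ∑ i ∈ Bᶜ, w₁ (σ₁ i) := by
      rw [image_sum σ₁ w₁ Bᶜ, image_compl]
    have hsplit : ∑ e ∈ A₀, w₂ e + ∑ e ∈ A₀ᶜ, w₂ e = ∑ e, w₂ e :=
      Finset.sum_add_sum_compl A₀ w₂
    rcases le_total ((∑ e, w₂ e) / 2) (∑ e ∈ A₀ᶜ, w₂ e) with h | h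
    · exact ⟨A₀, le_trans hS₁ (e1 ▸ min_le_left _ _), le_trans hS₂ h⟩
    · refine ⟨A₀ᶜ, le_trans hS₁ (e2 ▸ min_le_right _ _), ?_⟩
      rw [compl_compl]
      refine le_trans hS₂ ?_
      linarith
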